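/- Conversely, for the bottom-up parser of a deterministic regular tree grammar: if the parser on input tree x succeeds and returns a pair (A, r̄), then r̄ generates x from A; in particular x ∈ L(G|A). -/

import Mathlib

structure Rule (N : Type) (α : Type) where
  lhs : N
  sym : α
  rhs : List N
deriving DecidableEq

inductive RTree (α : Type) where
  | node : α → List (RTree α) → RTree α

def RTree.size {α : Type} : RTree α → Nat
  | .node _ ys => 1 + (ys.attach.map (fun y => RTree.size y.1)).sum
decreasing_by have := List.sizeOf_lt_of_mem y.2; simp only [RTree.node.sizeOf_spec]; omega

def RTree.children {α : Type} : RTree α → List (RTree α)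
  | .node _ ys => ys

def RTree.root {α : Type} : RTree α → α
  | .node x _ => x

def RTree.dfs {α : Type} : RTree α → List (RTree α)
  | .node x ys => (ys.attach.map (fun y => RTree.dfs y.1)).flatten ++ [.node x ys]
decreasing_by have := List.sizeOf_lt_of_mem y.2; simp only [RTree.node.sizeOf_spec]; omega

inductive GenList {N α : Type} (R : Set (Rule N α)) :
    List (Rule N α) → List N → List (RTree α) → Prop where
  | nil : GenList R [] [] []
  | step {r : Rule N α} {rs : List (Rule N α)} {stack : List N}
      {ys ts : List (RTree α)} :
      r ∈ R →
      ys.length = r.rhs.length →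
      GenList R rs (r.rhs ++ stack) (ys ++ ts) →
      GenList R (r :: rs) (r.lhs :: stack) (RTree.node r.sym ys :: ts)

def GenSeq {N α : Type} (R : Set (Rule N α)) (rs : List (Rule N α))
    (A : N) (t : RTree α) : Prop :=
  GenList R rs [A] [t]

def Lang {N α : Type} (R : Set (Rule N α)) (A : N) : Set (RTree α) :=
  {t | ∃ rs, GenSeq R rs A t}

def LangN {N α : Type} (R : Set (Rule N α)) (A : N) (n : Nat) : Set (RTree α) :=
  {t ∈ Lang R A | t.size ≤ n}

def Deterministic {N α : Type} (R : Set (Rule N α)) : Prop :=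
  ∀ r ∈ R, ∀ r' ∈ R, r.sym = r'.sym → r.rhs = r'.rhs → r = r'

def parse {N α : Type} [DecidableEq N] [DecidableEq α] (R : List (Rule N α)) :
    RTree α → Option (N × List (Rule N α))
  | RTree.node x ys => do
    let res ← ys.attach.mapM (fun y => parse R y.1)
    match R.find? (fun r => r.sym == x && r.rhs == res.map Prod.fst) with
    | some r => some (r.lhs, r :: (res.map Prod.snd).flatten)
    | none => none
decreasing_by have := List.sizeOf_lt_of_mem y.2; simp only [RTree.node.sizeOf_spec]; omega


lemma GenList.append_gen {N α : Type} {S : Set (Rule N α)}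
    {rs rs' : List (Rule N α)} {as bs : List N} {ts us : List (RTree α)}
    (h1 : GenList S rs as ts) (h2 : GenList S rs' bs us) :
    GenList S (rs ++ rs') (as ++ bs) (ts ++ us) := by
  induction h1 with
  | nil => simpa using h2
  | step hr hlen _ ih =>
    simp only [List.cons_append]
    exact GenList.step hr hlen (by simpa [List.append_assoc] using ih)

lemma GenList.length_eq {N α : Type} {S : Set (Rule N α)}
    {rs : List (Rule N α)} {as : List N} {ts : List (RTree α)}
    (h : GenList S rs as ts) : as.length = ts.length := by
  induction h with
  | nil => rfl
  | step hr hlen _ ih =>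
      simp only [List.length_cons, List.length_append] at ih ⊢
      omega

lemma mapM_gen {N α : Type} [DecidableEq N] [DecidableEq α]
    (R : List (Rule N α)) (ys : List (RTree α))
    (H : ∀ y ∈ ys, ∀ A rs, parse R y = some (A, rs) → GenList {r | r ∈ R} rs [A] [y]) :
    ∀ (l : List {y // y ∈ ys}) (res : List (N × List (Rule N α))),
      l.mapM (fun y => parse R y.1) = some res →
      GenList {r | r ∈ R} ((res.map Prod.snd).flatten) (res.map Prod.fst)
        (l.map Subtype.val) := by
  intro l
  induction l with
  | nil =>
    intro res h
    simp only [List.mapM_nil, Option.pure_def, Option.some.injEq] at h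
    subst h; exact GenList.nil
  | cons y l ih =>
    intro res h
    rw [List.mapM_cons] at h
    simp only [Option.pure_def, Option.bind_eq_bind, Option.bind_eq_some_iff, Option.some.injEq] at h
    obtain ⟨p, hp, ps, hps, rfl⟩ := h
    have h1 := H y.1 y.2 p.1 p.2 (by simpa using hp)
    have h2 := ih ps hps
    simpa using GenList.append_gen h1 h2

theorem parse_sound {N α : Type} [DecidableEq N] [DecidableEq α]
    (R : List (Rule N α)) :
    ∀ (t : RTree α) (A : N) (rs : List (Rule N α)),
      parse R t = some (A, rs) → GenList {r | r ∈ R} rs [A] [t]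
  | .node x ys, A, rs, h => by
    have H : ∀ y ∈ ys, ∀ A rs, parse R y = some (A, rs) → GenList {r | r ∈ R} rs [A] [y] := by
      intro y hy A rs h
      exact parse_sound R y A rs h
    rw [parse] at h
    simp only [Option.pure_def, Option.bind_eq_bind, Option.bind_eq_some_iff] at h
    obtain ⟨res, hres, h⟩ := h
    have hgen := mapM_gen R ys H ys.attach res hres
    rw [List.attach_map_subtype_val] at hgen
    cases hfind : R.find? (fun r => r.sym == x && r.rhs == res.map Prod.fst) with
    | none => rw [hfind] at h; simp at h
    | some r =>
      rw [hfind] at h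
      simp only [Option.some.injEq, Prod.mk.injEq] at h
      obtain ⟨rfl, rfl⟩ := h
      have hrR : r ∈ R := List.mem_of_find?_eq_some hfind
      have hpred := List.find?_some hfind
      simp only [Bool.and_eq_true, beq_iff_eq] at hpred
      obtain ⟨hsym, hrhs⟩ := hpred
      have hlen : ys.length = r.rhs.length := by
        have := GenList.length_eq hgen
        simp [hrhs, ← this]
      subst hsym
      exact GenList.step hrR hlen (by simpa [← hrhs] using hgen)
decreasing_by have := List.sizeOf_lt_of_mem hy; simp only [RTree.node.sizeOf_spec]; omega

theorem stmt6 {N alpha : Type} [DecidableEq N] [DecidableEq alpha]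
    (R : List (Rule N alpha)) (hdet : Deterministic {r | r ∈ R})
    (t : RTree alpha) (A : N) (rs : List (Rule N alpha))
    (h : parse R t = some (A, rs)) :
    GenSeq {r | r ∈ R} rs A t ∧ t ∈ Lang {r | r ∈ R} A := by
  have hg := parse_sound R t A rs h
  exact ⟨hg, ⟨rs, hg⟩⟩
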